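/- The projective (ℝ⁺-) stabilizer of the light-cone vector u₀ = (1,0,1) in SO₀(2,1) equals NA: a matrix M ∈ SO₀(2,1) satisfies M·(1,0,1) = c·(1,0,1) for some c > 0 if and only if M = N(r)·A(s) for some r, s ∈ ℝ, where N(r) = [[1 − r²/2, r, r²/2],[−r, 1, r],[−r²/2, r, 1 + r²/2]] and A(s) = [[cosh s, 0, sinh s],[0, 1, 0],[sinh s, 0, cosh s]]. -/
import Mathlib
open Matrix
noncomputable def eta (u : Fin 3 → ℝ) : ℝ := (u 2) ^ 2 - (u 0) ^ 2 - (u 1) ^ 2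

def inSO0 (M : Matrix (Fin 3) (Fin 3) ℝ) : Prop :=
  (∀ u : Fin 3 → ℝ, eta (M *ᵥ u) = eta u) ∧ M.det = 1 ∧ 0 < M 2 2

noncomputable def Amat (s : ℝ) : Matrix (Fin 3) (Fin 3) ℝ :=
  !![Real.cosh s, 0, Real.sinh s;
     0, 1, 0;
     Real.sinh s, 0, Real.cosh s]

noncomputable def Nmat (r : ℝ) : Matrix (Fin 3) (Fin 3) ℝ :=
  !![1 - r ^ 2 / 2, r, r ^ 2 / 2;
     -r, 1, r;
     -r ^ 2 / 2, r, 1 + r ^ 2 / 2]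

lemma etaA (s : ℝ) (u : Fin 3 → ℝ) : eta (Amat s *ᵥ u) = eta u := by
  simp [eta, Amat, Matrix.mulVec, dotProduct, Fin.sum_univ_three]
  linear_combination (u 2 ^ 2 - u 0 ^ 2) * Real.cosh_sq_sub_sinh_sq s

lemma detA (s : ℝ) : (Amat s).det = 1 := by
  rw [Matrix.det_fin_three]
  simp [Amat]
  nlinarith [Real.cosh_sq_sub_sinh_sq s]

lemma Amat_neg_mul (s : ℝ) : Amat (-s) * Amat s = 1 := by
  ext i j
  fin_cases i <;> fin_cases j <;>
    simp [Amat, Matrix.mul_apply, Fin.sum_univ_three, Matrix.one_apply] <;>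
    nlinarith [Real.cosh_sq_sub_sinh_sq s]

lemma AmulVec (s : ℝ) : Amat s *ᵥ ![(1:ℝ),0,1] = Real.exp s • ![(1:ℝ),0,1] := by
  funext i
  fin_cases i <;>
    simp [Amat, Matrix.mulVec, dotProduct, Fin.sum_univ_three] <;>
    rw [← Real.cosh_add_sinh] <;> ring

lemma NmulVec (r : ℝ) : Nmat r *ᵥ ![(1:ℝ),0,1] = ![(1:ℝ),0,1] := by
  funext i
  fin_cases i <;>
    simp [Nmat, Matrix.mulVec, dotProduct, Fin.sum_univ_three] <;> ring

lemma fix_eq_N (Q : Matrix (Fin 3) (Fin 3) ℝ)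
    (hη : ∀ u, eta (Q *ᵥ u) = eta u) (hdet : Q.det = 1)
    (hu : Q *ᵥ ![(1:ℝ),0,1] = ![(1:ℝ),0,1]) : Q = Nmat (Q 0 1) := by
  have h0 := hη ![1,0,0]
  have h1 := hη ![0,1,0]
  have h2 := hη ![0,0,1]
  have h01 := hη ![1,1,0]
  have h12 := hη ![0,1,1]
  have e0 := congrFun hu 0
  have e1 := congrFun hu 1
  have e2 := congrFun hu 2
  simp [eta, Matrix.mulVec, dotProduct, Fin.sum_univ_three] at h0 h1 h2 h01 h12 e0 e1 e2
  rw [Matrix.det_fin_three] at hdet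
  have hq02 : Q 0 2 = 1 - Q 0 0 := by linarith
  have hq12 : Q 1 2 = -Q 1 0 := by linarith
  have hq22 : Q 2 2 = 1 - Q 2 0 := by linarith
  rw [hq02, hq12, hq22] at h2 h12 hdet
  have g01 : Q 2 1 * Q 2 0 - Q 0 1 * Q 0 0 - Q 1 1 * Q 1 0 = 0 := by
    linear_combination (h01 - h0 - h1) / 2
  have g12 : Q 2 1 * (1 - Q 2 0) - Q 0 1 * (1 - Q 0 0) - Q 1 1 * (-Q 1 0) = 0 := by
    linear_combination (h12 - h1 - h2) / 2
  have hA : Q 0 0 = Q 2 0 + 1 := by linear_combination (h2 - h0) / 2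
  have hB : Q 2 1 = Q 0 1 := by linear_combination g01 + g12
  rw [hA, hB] at hdet
  rw [hA] at h0 g01
  rw [hB] at g01
  have hC : Q 2 0 = -(Q 1 0) ^ 2 / 2 := by linear_combination (-1/2) * h0
  have hD : Q 1 1 * Q 1 0 = -(Q 0 1) := by linear_combination -g01
  have hm1 : Q 1 1 = 1 := by linear_combination hdet
  rw [hm1] at hD
  have hq10 : Q 1 0 = -(Q 0 1) := by linarith
  have hq20 : Q 2 0 = -(Q 0 1) ^ 2 / 2 := by rw [hC, hq10]; ring
  have hq00 : Q 0 0 = 1 - (Q 0 1) ^ 2 / 2 := by rw [hA, hq20]; ring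
  ext i j
  fin_cases i <;> fin_cases j <;>
    simp [Nmat, hq00, hq10, hq20, hm1, hB, hq02, hq12, hq22] <;> ring

/-- the projective (ℝ⁺-) stabilizer of the light-cone vector
u₀ = (1,0,1) in SO₀(2,1) equals NA. -/
theorem stmt11 (M : Matrix (Fin 3) (Fin 3) ℝ) (hM : inSO0 M) :
    (∃ c : ℝ, 0 < c ∧ M *ᵥ ![(1 : ℝ), 0, 1] = c • ![(1 : ℝ), 0, 1]) ↔
      ∃ r s : ℝ, M = Nmat r * Amat s := by
  obtain ⟨hη, hdet, _⟩ := hM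
  constructor
  · rintro ⟨c, hc, hMv⟩
    set s := Real.log c with hs
    set Q := M * Amat (-s) with hQ
    have hηQ : ∀ u, eta (Q *ᵥ u) = eta u := by
      intro u
      rw [hQ, ← Matrix.mulVec_mulVec, hη, etaA]
    have hdetQ : Q.det = 1 := by
      rw [hQ, Matrix.det_mul, hdet, detA, one_mul]
    have huQ : Q *ᵥ ![(1:ℝ),0,1] = ![(1:ℝ),0,1] := by
      rw [hQ, ← Matrix.mulVec_mulVec, AmulVec, Matrix.mulVec_smul, hMv, smul_smul]
      rw [Real.exp_neg, Real.exp_log hc]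
      rw [inv_mul_cancel₀ (ne_of_gt hc), one_smul]
    have := fix_eq_N Q hηQ hdetQ huQ
    refine ⟨Q 0 1, s, ?_⟩
    calc M = M * (Amat (-s) * Amat s) := by rw [Amat_neg_mul, mul_one]
    _ = Q * Amat s := by rw [hQ, mul_assoc]
    _ = Nmat (Q 0 1) * Amat s := congrArg (fun X => X * Amat s) this
  · rintro ⟨r, s, rfl⟩
    refine ⟨Real.exp s, Real.exp_pos s, ?_⟩
    rw [← Matrix.mulVec_mulVec, AmulVec, Matrix.mulVec_smul, NmulVec]
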